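/- Fix γ > 0 and 1 ≤ p ≤ ∞. The differential operator d/dx is chaotic in the sense of Devaney on the metric space (E, ρ_p): the set of periodic points of d/dx in E is dense in (E, ρ_p), and d/dx is topologically transitive on (E, ρ_p). -/

import Mathlib

open MeasureTheory Set Filter
open scoped ENNReal Topology

/-- The `L^p` distance of two functions over the interval `[a, b]`. -/
noncomputable def rho (a b : ℝ) (p : ℝ≥0∞) (f g : ℝ → ℝ) : ℝ :=
  (eLpNorm (fun x => f x - g x) p (volume.restrict (Icc a b))).toReal

/-- A sequence taking values in `{0, 1}`. -/
def IsBinary (a : ℕ → ℝ) : Prop := ∀ n, a n = 0 ∨ a n = 1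

/-- The set `E` of smooth functions of the form `Σ aₙ/n! xⁿ` with binary coefficients. -/
def Esp : Set (ℝ → ℝ) :=
  {f | ContDiff ℝ (⊤ : ℕ∞) f ∧ ∃ a : ℕ → ℝ, IsBinary a ∧
    ∀ x : ℝ, HasSum (fun n : ℕ => a n / (Nat.factorial n : ℝ) * x ^ n) (f x)}

noncomputable def fa (a : ℕ → ℝ) (x : ℝ) : ℝ :=
  ∑' n : ℕ, a n / (Nat.factorial n : ℝ) * x ^ n

lemma summable_fa {a : ℕ → ℝ} (ha : ∀ n, |a n| ≤ 1) (x : ℝ) :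
    Summable (fun n : ℕ => a n / (Nat.factorial n : ℝ) * x ^ n) := by
  apply Summable.of_norm_bounded (Real.summable_pow_div_factorial |x|)
  intro n
  have h1 : (0:ℝ) < (Nat.factorial n : ℝ) := by positivity
  rw [Real.norm_eq_abs, abs_mul, abs_div, abs_pow, abs_of_pos h1]
  rw [div_mul_eq_mul_div, div_le_div_iff₀ h1 h1]
  have := ha n
  have h2 : (0:ℝ) ≤ |x| ^ n := pow_nonneg (abs_nonneg x) n
  exact mul_le_mul_of_nonneg_right (mul_le_of_le_one_left h2 this) h1.le

lemma hasSum_fa {a : ℕ → ℝ} (ha : ∀ n, |a n| ≤ 1) (x : ℝ) :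
    HasSum (fun n : ℕ => a n / (Nat.factorial n : ℝ) * x ^ n) (fa a x) :=
  (summable_fa ha x).hasSum

lemma hasDerivAt_fa {a : ℕ → ℝ} (ha : ∀ n, |a n| ≤ 1) (x : ℝ) :
    HasDerivAt (fa a) (fa (fun n => a (n + 1)) x) x := by
  have hR1 : 1 ≤ |x| + 1 := le_add_of_nonneg_left (abs_nonneg x)
  have hR0 : (0:ℝ) < |x| + 1 := lt_of_lt_of_le one_pos hR1
  have hu : Summable (fun n : ℕ => (n : ℝ) * (|x|+1) ^ (n - 1) / (Nat.factorial n : ℝ)) := by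
    apply (summable_nat_add_iff 1).1
    apply (Real.summable_pow_div_factorial (|x|+1)).congr
    intro n
    rw [Nat.factorial_succ, Nat.add_sub_cancel]
    push_cast
    field_simp
  have hg : ∀ (n : ℕ) (y : ℝ), HasDerivAt (fun z : ℝ => a n / (Nat.factorial n : ℝ) * z ^ n)
      (a n / (Nat.factorial n : ℝ) * ((n:ℝ) * y ^ (n - 1))) y :=
    fun n y => (hasDerivAt_pow n y).const_mul _
  have hg' : ∀ (n : ℕ) (y : ℝ), y ∈ Metric.ball (0:ℝ) (|x|+1) →
      ‖a n / (Nat.factorial n : ℝ) * ((n:ℝ) * y ^ (n - 1))‖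
        ≤ (n:ℝ) * (|x|+1) ^ (n-1) / (Nat.factorial n : ℝ) := by
    intro n y hy
    have hyR : |y| ≤ |x| + 1 := by
      rw [Metric.mem_ball, Real.dist_eq, sub_zero] at hy; exact hy.le
    have h1 : (0:ℝ) < (Nat.factorial n : ℝ) := by positivity
    rw [Real.norm_eq_abs, abs_mul, abs_mul, abs_div, abs_pow, abs_of_pos h1, Nat.abs_cast]
    calc |a n| / (Nat.factorial n : ℝ) * ((n:ℝ) * |y| ^ (n-1))
        ≤ 1 / (Nat.factorial n : ℝ) * ((n:ℝ) * (|x|+1) ^ (n-1)) := by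
          gcongr
          exact ha n
      _ = (n:ℝ) * (|x|+1) ^ (n-1) / (Nat.factorial n : ℝ) := by ring
  have hmem0 : (0:ℝ) ∈ Metric.ball (0:ℝ) (|x|+1) := Metric.mem_ball_self hR0
  have hmemx : x ∈ Metric.ball (0:ℝ) (|x|+1) := by
    rw [Metric.mem_ball, Real.dist_eq, sub_zero]
    linarith [abs_nonneg x]
  have H := hasDerivAt_tsum_of_isPreconnected hu Metric.isOpen_ball
    (convex_ball (0:ℝ) (|x|+1)).isPreconnected (fun n y _ => hg n y) hg' hmem0
    (summable_fa ha 0) hmemx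
  have hsum' : Summable (fun n : ℕ => a n / (Nat.factorial n : ℝ) * ((n:ℝ) * x ^ (n-1))) :=
    Summable.of_norm_bounded hu (fun n => hg' n x hmemx)
  have heq : (∑' n : ℕ, a n / (Nat.factorial n : ℝ) * ((n:ℝ) * x ^ (n-1)))
      = fa (fun n => a (n+1)) x := by
    rw [hsum'.tsum_eq_zero_add]
    simp only [Nat.cast_zero, zero_mul, mul_zero, zero_add]
    apply tsum_congr
    intro n
    rw [Nat.factorial_succ, Nat.add_sub_cancel]
    push_cast
    field_simp
  rw [← heq]
  exact H

lemma deriv_fa {a : ℕ → ℝ} (ha : ∀ n, |a n| ≤ 1) :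
    deriv (fa a) = fa (fun n => a (n + 1)) :=
  funext fun x => (hasDerivAt_fa ha x).deriv

lemma differentiable_fa {a : ℕ → ℝ} (ha : ∀ n, |a n| ≤ 1) : Differentiable ℝ (fa a) :=
  fun x => (hasDerivAt_fa ha x).differentiableAt

lemma iterate_deriv_fa {a : ℕ → ℝ} (ha : ∀ n, |a n| ≤ 1) (m : ℕ) :
    deriv^[m] (fa a) = fa (fun n => a (n + m)) := by
  induction m with
  | zero => simp [fa]
  | succ k ih =>
    rw [Function.iterate_succ_apply', ih, deriv_fa (fun n => ha (n + k))]
    have h2 : (fun n => a (n + 1 + k)) = fun n => a (n + (k + 1)) := by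
      funext n; congr 1; omega
    rw [h2]

lemma contDiff_fa {a : ℕ → ℝ} (ha : ∀ n, |a n| ≤ 1) : ContDiff ℝ (⊤ : ℕ∞) (fa a) := by
  suffices h : ∀ (N : ℕ) (b : ℕ → ℝ), (∀ n, |b n| ≤ 1) → ContDiff ℝ N (fa b) by
    exact contDiff_infty.2 fun N => h N a ha
  intro N
  induction N with
  | zero =>
    intro b hb
    exact contDiff_zero.2 (differentiable_fa hb).continuous
  | succ k ih =>
    intro b hb
    have hcast : ((k+1:ℕ) : WithTop ℕ∞) = (k : WithTop ℕ∞) + 1 := by push_cast; ring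
    rw [hcast, contDiff_succ_iff_deriv]
    refine ⟨differentiable_fa hb, by simp, ?_⟩
    rw [deriv_fa hb]
    exact ih _ (fun n => hb (n + 1))

lemma binary_abs_le {a : ℕ → ℝ} (ha : IsBinary a) : ∀ n, |a n| ≤ 1 := by
  intro n
  rcases ha n with h | h <;> simp [h]

lemma fa_mem_Esp {a : ℕ → ℝ} (ha : IsBinary a) : fa a ∈ Esp :=
  ⟨contDiff_fa (binary_abs_le ha), a, ha, fun x => hasSum_fa (binary_abs_le ha) x⟩

lemma eq_fa_of_mem_Esp {f : ℝ → ℝ} {a : ℕ → ℝ}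
    (hsum : ∀ x : ℝ, HasSum (fun n : ℕ => a n / (Nat.factorial n : ℝ) * x ^ n) (f x)) :
    f = fa a :=
  funext fun x => ((hsum x).tsum_eq).symm

set_option maxHeartbeats 1000000 in
lemma tail_bound {a b : ℕ → ℝ} (ha : IsBinary a) (hb : IsBinary b) (N : ℕ)
    (hN : ∀ n < N, a n = b n) {γ : ℝ} (hγ : 0 ≤ γ) {x : ℝ} (hx : x ∈ Icc (0:ℝ) γ) :
    |fa a x - fa b x| ≤ ∑' n : ℕ, γ ^ (n + N) / (Nat.factorial (n + N) : ℝ) := by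
  have hxγ : |x| ≤ γ := by
    rw [abs_of_nonneg hx.1]; exact hx.2
  have hd1 : ∀ n, |a n - b n| ≤ 1 := by
    intro n
    rcases ha n with h | h <;> rcases hb n with h' | h' <;> simp [h, h']
  have heq : (fun n : ℕ => (a n - b n) / (Nat.factorial n : ℝ) * x ^ n)
      = fun n : ℕ => a n / (Nat.factorial n : ℝ) * x ^ n
        - b n / (Nat.factorial n : ℝ) * x ^ n := by
    funext n; ring
  have hS : HasSum (fun n : ℕ => (a n - b n) / (Nat.factorial n : ℝ) * x ^ n)
      (fa a x - fa b x) := by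
    rw [heq]
    exact (hasSum_fa (binary_abs_le ha) x).sub (hasSum_fa (binary_abs_le hb) x)
  have hd : Summable (fun n : ℕ => (a n - b n) / (Nat.factorial n : ℝ) * x ^ n) := hS.summable
  have key : fa a x - fa b x
      = ∑' n : ℕ, (a (n + N) - b (n + N)) / (Nat.factorial (n + N) : ℝ) * x ^ (n + N) := by
    rw [← hS.tsum_eq, ← hd.sum_add_tsum_nat_add N]
    have hz : (∑ i ∈ Finset.range N,
        (a i - b i) / (Nat.factorial i : ℝ) * x ^ i) = 0 := by
      apply Finset.sum_eq_zero
      intro i hi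
      rw [hN i (Finset.mem_range.1 hi)]
      ring
    rw [hz, zero_add]
  have hbound : ∀ m : ℕ, ‖(a m - b m) / (Nat.factorial m : ℝ) * x ^ m‖
      ≤ γ ^ m / (Nat.factorial m : ℝ) := by
    intro m
    have h1 : (0:ℝ) < (Nat.factorial m : ℝ) := by positivity
    rw [Real.norm_eq_abs, abs_mul, abs_div, abs_pow, abs_of_pos h1]
    calc |a m - b m| / (Nat.factorial m : ℝ) * |x| ^ m
        ≤ 1 / (Nat.factorial m : ℝ) * γ ^ m := by
          gcongr
          exact hd1 m
      _ = γ ^ m / (Nat.factorial m : ℝ) := by ring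
  have hsn : Summable (fun n : ℕ =>
      ‖(a (n + N) - b (n + N)) / (Nat.factorial (n + N) : ℝ) * x ^ (n + N)‖) :=
    (summable_nat_add_iff N).2 hd.abs
  have hsg : Summable (fun n : ℕ => γ ^ (n + N) / (Nat.factorial (n + N) : ℝ)) :=
    (summable_nat_add_iff N).2 (Real.summable_pow_div_factorial γ)
  rw [key]
  calc |∑' n : ℕ, (a (n + N) - b (n + N)) / (Nat.factorial (n + N) : ℝ) * x ^ (n + N)|
      ≤ ∑' n : ℕ, ‖(a (n + N) - b (n + N)) / (Nat.factorial (n + N) : ℝ) * x ^ (n + N)‖ :=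
        norm_tsum_le_tsum_norm hsn
    _ ≤ ∑' n : ℕ, γ ^ (n + N) / (Nat.factorial (n + N) : ℝ) :=
        Summable.tsum_le_tsum (fun n => hbound (n + N)) hsn hsg

lemma tail_tendsto {γ : ℝ} :
    Tendsto (fun N : ℕ => ∑' n : ℕ, γ ^ (n + N) / (Nat.factorial (n + N) : ℝ))
      atTop (𝓝 0) :=
  tendsto_sum_nat_add (fun n : ℕ => γ ^ n / (Nat.factorial n : ℝ))

lemma rho_le {γ : ℝ} (hγ : 0 < γ) (p : ℝ≥0∞) {f g : ℝ → ℝ} {C : ℝ} (hC : 0 ≤ C)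
    (h : ∀ x ∈ Icc (0:ℝ) γ, |f x - g x| ≤ C) :
    rho 0 γ p f g ≤ ((ENNReal.ofReal γ) ^ p.toReal⁻¹).toReal * C := by
  have hb : ∀ᵐ x ∂(volume.restrict (Icc (0:ℝ) γ)), ‖f x - g x‖ ≤ C :=
    (ae_restrict_iff' measurableSet_Icc).2 (ae_of_all _ h)
  have hle := eLpNorm_le_of_ae_bound (p := p) hb
  rw [Measure.restrict_apply_univ, Real.volume_Icc, sub_zero] at hle
  have hfin : (ENNReal.ofReal γ) ^ p.toReal⁻¹ * ENNReal.ofReal C ≠ ⊤ :=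
    ENNReal.mul_ne_top (ENNReal.rpow_ne_top_of_nonneg (by positivity) ENNReal.ofReal_ne_top)
      ENNReal.ofReal_ne_top
  have := ENNReal.toReal_mono hfin hle
  rwa [ENNReal.toReal_mul, ENNReal.toReal_ofReal hC] at this


lemma exists_tail_lt (γ : ℝ) {δ : ℝ} (hδ : 0 < δ) :
    ∃ N₀ : ℕ, ∀ N ≥ N₀, (∑' n : ℕ, γ ^ (n + N) / (Nat.factorial (n + N) : ℝ)) < δ := by
  have h := tail_tendsto (γ := γ)
  have h2 := h.eventually (eventually_lt_nhds hδ)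
  exact eventually_atTop.1 h2

lemma rho_fa_lt (γ : ℝ) (hγ : 0 < γ) (p : ℝ≥0∞) {a b : ℕ → ℝ} (ha : IsBinary a)
    (hb : IsBinary b) {ε : ℝ} (hε : 0 < ε) {N : ℕ} (hagree : ∀ n < N, a n = b n)
    (htail : (∑' n : ℕ, γ ^ (n + N) / (Nat.factorial (n + N) : ℝ))
      < ε / (((ENNReal.ofReal γ) ^ p.toReal⁻¹).toReal + 1)) :
    rho 0 γ p (fa a) (fa b) < ε := by
  set M := ((ENNReal.ofReal γ) ^ p.toReal⁻¹).toReal with hM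
  have hM0 : 0 ≤ M := ENNReal.toReal_nonneg
  set T := ∑' n : ℕ, γ ^ (n + N) / (Nat.factorial (n + N) : ℝ) with hT
  have hT0 : 0 ≤ T := tsum_nonneg (fun n => by positivity)
  have h1 : rho 0 γ p (fa a) (fa b) ≤ M * T :=
    rho_le hγ p hT0 (fun x hx => tail_bound ha hb N hagree hγ.le hx)
  have hM1 : (0:ℝ) < M + 1 := by linarith
  calc rho 0 γ p (fa a) (fa b) ≤ M * T := h1
    _ ≤ (M + 1) * T := by nlinarith
    _ < (M + 1) * (ε / (M + 1)) := mul_lt_mul_of_pos_left htail hM1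
    _ = ε := by field_simp


/-- Fix `γ > 0` and `1 ≤ p ≤ ∞`. The set `E` is invariant under `d/dx`,
and `d/dx` is Devaney chaotic on `(E, ρ_p)`: its periodic points are dense in `(E, ρ_p)`,
and it is topologically transitive on `(E, ρ_p)` (expressed in the equivalent ε-form for
metric spaces). -/
theorem stmt1 (γ : ℝ) (hγ : 0 < γ) (p : ℝ≥0∞) (hp : 1 ≤ p) :
    (∀ f ∈ Esp, deriv f ∈ Esp) ∧
    (∀ f ∈ Esp, ∀ ε > (0 : ℝ), ∃ g ∈ Esp,
      (∃ m : ℕ, 1 ≤ m ∧ Set.EqOn (deriv^[m] g) g (Icc 0 γ)) ∧ rho 0 γ p f g < ε) ∧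
    (∀ f ∈ Esp, ∀ g ∈ Esp, ∀ ε > (0 : ℝ), ∃ h ∈ Esp, ∃ n : ℕ,
      rho 0 γ p f h < ε ∧ rho 0 γ p (deriv^[n] h) g < ε) := by
  have hM0 : 0 ≤ ((ENNReal.ofReal γ) ^ p.toReal⁻¹).toReal := ENNReal.toReal_nonneg
  refine ⟨?_, ?_, ?_⟩
  · rintro f ⟨hf, a, ha, hsum⟩
    have hfa : f = fa a := eq_fa_of_mem_Esp hsum
    rw [hfa, deriv_fa (binary_abs_le ha)]
    exact fa_mem_Esp (fun n => ha (n + 1))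
  · rintro f ⟨hf, a, ha, hsum⟩ ε hε
    have hfa : f = fa a := eq_fa_of_mem_Esp hsum
    have hδ : 0 < ε / (((ENNReal.ofReal γ) ^ p.toReal⁻¹).toReal + 1) :=
      div_pos hε (by linarith)
    obtain ⟨N₀, hN₀⟩ := exists_tail_lt γ hδ
    set N := max N₀ 1 with hNdef
    have hN1 : 1 ≤ N := le_max_right _ _
    set b : ℕ → ℝ := fun n => a (n % N) with hbdef
    have hbbin : IsBinary b := fun n => ha _
    have hagree : ∀ n < N, a n = b n := by
      intro n hn
      simp only [hbdef, Nat.mod_eq_of_lt hn]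
    refine ⟨fa b, fa_mem_Esp hbbin, ⟨N, hN1, ?_⟩, ?_⟩
    · rw [iterate_deriv_fa (binary_abs_le hbbin) N]
      have hper : (fun n => b (n + N)) = b := by
        funext n
        simp only [hbdef, Nat.add_mod_right]
      rw [hper]
      exact Set.eqOn_refl _ _
    · rw [hfa]
      exact rho_fa_lt γ hγ p ha hbbin hε hagree (hN₀ N (le_max_left _ _))
  · rintro f ⟨hf, a, ha, hsumf⟩ g ⟨hg, b, hb, hsumg⟩ ε hε
    have hfa : f = fa a := eq_fa_of_mem_Esp hsumf
    have hgb : g = fa b := eq_fa_of_mem_Esp hsumg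
    have hδ : 0 < ε / (((ENNReal.ofReal γ) ^ p.toReal⁻¹).toReal + 1) :=
      div_pos hε (by linarith)
    obtain ⟨N₀, hN₀⟩ := exists_tail_lt γ hδ
    set c : ℕ → ℝ := fun n => if n < N₀ then a n else b (n - N₀) with hcdef
    have hcbin : IsBinary c := by
      intro n
      by_cases h : n < N₀
      · simpa [hcdef, h] using ha n
      · simpa [hcdef, h] using hb (n - N₀)
    have hagree : ∀ n < N₀, a n = c n := by
      intro n hn
      simp [hcdef, hn]
    refine ⟨fa c, fa_mem_Esp hcbin, N₀, ?_, ?_⟩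
    · rw [hfa]
      exact rho_fa_lt γ hγ p ha hcbin hε hagree (hN₀ N₀ le_rfl)
    · have hit : deriv^[N₀] (fa c) = fa b := by
        rw [iterate_deriv_fa (binary_abs_le hcbin) N₀]
        congr 1
        funext n
        simp [hcdef]
      rw [hit, hgb]
      have hzero : rho 0 γ p (fa b) (fa b) = 0 := by
        simp [rho]
      linarith
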